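/- arXiv:2501.08713 — 5 statements merged into one kernel-verified Lean document; each statement's English description precedes it below -/
import Mathlib

section
/- Let m be a natural number and let δ₁ ≤ δ₂ be ordinals with δ₂ < ω^m. Then there exists a finite list of natural numbers i₀, i₁, …, i_{n-1}, each strictly less than m, such that δ₁ + ω^{i₀} + ω^{i₁} + ⋯ + ω^{i_{n-1}} = δ₂, and moreover every partial sum δ₁ + ω^{i₀} + ⋯ + ω^{i_{j}} is at most δ₂. -/
open Ordinal

private theorem aux_reach (m : ℕ) (γ : Ordinal) : ∀ δ₁ : Ordinal, γ < omega0 ^ (m : Ordinal) →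
    ∃ l : List ℕ, (∀ i ∈ l, i < m) ∧
      l.foldl (fun (s : Ordinal) (i : ℕ) => s + omega0 ^ (i : Ordinal)) δ₁ = δ₁ + γ ∧
      ∀ t : List ℕ, t <+: l →
        t.foldl (fun (s : Ordinal) (i : ℕ) => s + omega0 ^ (i : Ordinal)) δ₁ ≤ δ₁ + γ := by
  induction γ using Ordinal.induction with
  | h γ IH =>
    intro δ₁ hγm
    rcases eq_or_ne γ 0 with rfl | hγ
    · refine ⟨[], by simp, by simp, ?_⟩
      intro t ht
      rw [List.prefix_nil.mp ht]
      simp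
    · have hγpos : 0 < γ := pos_iff_ne_zero.mpr hγ
      have him : Ordinal.log omega0 γ < (m : Ordinal) := by
        rwa [← Ordinal.lt_opow_iff_log_lt one_lt_omega0 hγ]
      obtain ⟨n, hn⟩ := Ordinal.lt_omega0.mp (him.trans (nat_lt_omega0 m))
      have hnm : n < m := by rwa [hn, Nat.cast_lt] at him
      have hi : omega0 ^ (n : Ordinal) ≤ γ := by
        rw [← hn]; exact Ordinal.opow_log_le_self _ hγ
      have hlt : γ < omega0 ^ (n : Ordinal) + γ := by
        by_contra h
        push_neg at h
        have h2 := Ordinal.add_le_right_iff_mul_omega0_le.mp h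
        rw [← Ordinal.opow_succ, ← hn] at h2
        exact (Ordinal.lt_opow_succ_log_self one_lt_omega0 γ).not_ge h2
      have hsub : γ - omega0 ^ (n : Ordinal) < γ := Ordinal.sub_lt_of_lt_add hlt hγpos
      have hre : omega0 ^ (n : Ordinal) + (γ - omega0 ^ (n : Ordinal)) = γ :=
        Ordinal.add_sub_cancel_of_le hi
      obtain ⟨l, hl1, hl2, hl3⟩ := IH _ hsub (δ₁ + omega0 ^ (n : Ordinal)) (hsub.trans hγm)
      refine ⟨n :: l, ?_, ?_, ?_⟩
      · intro j hj
        rcases List.mem_cons.mp hj with rfl | hj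
        · exact hnm
        · exact hl1 _ hj
      · rw [List.foldl_cons, hl2, add_assoc, hre]
      · intro t ht
        rcases t with _ | ⟨a, t⟩
        · simp only [List.foldl_nil]; exact le_add_right (le_refl δ₁)
        · obtain ⟨rfl, ht'⟩ := List.cons_prefix_cons.mp ht
          calc List.foldl (fun (s : Ordinal) (i : ℕ) => s + omega0 ^ (i : Ordinal)) δ₁ (a :: t)
              = List.foldl (fun (s : Ordinal) (i : ℕ) => s + omega0 ^ (i : Ordinal))
                  (δ₁ + omega0 ^ (a : Ordinal)) t := by rw [List.foldl_cons]
            _ ≤ δ₁ + omega0 ^ (a : Ordinal) + (γ - omega0 ^ (a : Ordinal)) := hl3 t ht'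
            _ = δ₁ + γ := by rw [add_assoc, hre]

/-- For ordinals `δ₁ ≤ δ₂ < ω^m`, the ordinal `δ₂` can be reached from `δ₁` by
successively adding powers `ω^i` with `i < m`, with all partial sums at most `δ₂`. -/
theorem ordinal_reach_by_omega_powers (m : ℕ) (δ₁ δ₂ : Ordinal)
    (h₁ : δ₁ ≤ δ₂) (h₂ : δ₂ < Ordinal.omega0 ^ (m : Ordinal)) :
    ∃ l : List ℕ, (∀ i ∈ l, i < m) ∧
      l.foldl (fun (s : Ordinal) (i : ℕ) => s + Ordinal.omega0 ^ (i : Ordinal)) δ₁ = δ₂ ∧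
      ∀ t : List ℕ, t <+: l →
        t.foldl (fun (s : Ordinal) (i : ℕ) => s + Ordinal.omega0 ^ (i : Ordinal)) δ₁ ≤ δ₂ := by
  have hγ : δ₂ - δ₁ < omega0 ^ (m : Ordinal) :=
    lt_of_le_of_lt (Ordinal.sub_le_self _ _) h₂
  obtain ⟨l, hl1, hl2, hl3⟩ := aux_reach m (δ₂ - δ₁) δ₁ hγ
  rw [Ordinal.add_sub_cancel_of_le h₁] at hl2 hl3
  exact ⟨l, hl1, hl2, hl3⟩
end

section
/- (Positional determinacy of parity games) Let G = (V_I, V_II, E, c) be a parity game: V = V_I ⊎ V_II, every vertex has at least one outgoing E-edge, and c : V → Fin d is a coloring. Then the winning regions of the two players partition V, and each player has a uniform memoryless winning strategy: a function s mapping each of her vertices to an out-neighbour, such that every play consistent with s starting from any vertex of her winning region is winning for her. -/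
/-- A parity game: `VI` are player I's vertices (player II owns the complement),
`E` is the edge relation and `col` the coloring. -/
structure PGame (V : Type*) where
  VI : Set V
  E : V → V → Prop
  col : V → ℕ

namespace PGame

variable {V : Type*}

/-- An infinite `E`-path. -/
def IsPlay (G : PGame V) (p : ℕ → V) : Prop := ∀ n, G.E (p n) (p (n + 1))

/-- A play is winning for player I if the least color occurring infinitely often is even. -/
def WinsI (G : PGame V) (p : ℕ → V) : Prop :=
  ∃ i, Even i ∧ {n | G.col (p n) = i}.Infinite ∧ ∀ j < i, {n | G.col (p n) = j}.Finite

/-- The history `p 0, …, p n` of a play. -/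
def hist (p : ℕ → V) (n : ℕ) : List V := List.ofFn fun i : Fin (n + 1) => p i

/-- A (general) strategy for player I produces legal moves. -/
def LegalI (G : PGame V) (s : List V → V) : Prop :=
  ∀ h v, h.getLast? = some v → v ∈ G.VI → G.E v (s h)

/-- A play from `v` consistent with player I's strategy `s`. -/
def ConsI (G : PGame V) (s : List V → V) (v : V) (p : ℕ → V) : Prop :=
  p 0 = v ∧ G.IsPlay p ∧ ∀ n, p n ∈ G.VI → p (n + 1) = s (hist p n)

/-- `v` is in the winning region of player I. -/
def WinRegI (G : PGame V) (v : V) : Prop :=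
  ∃ s, G.LegalI s ∧ ∀ p, G.ConsI s v p → G.WinsI p

def LegalII (G : PGame V) (s : List V → V) : Prop :=
  ∀ h v, h.getLast? = some v → v ∉ G.VI → G.E v (s h)

def ConsII (G : PGame V) (s : List V → V) (v : V) (p : ℕ → V) : Prop :=
  p 0 = v ∧ G.IsPlay p ∧ ∀ n, p n ∉ G.VI → p (n + 1) = s (hist p n)

/-- `v` is in the winning region of player II (a play not winning for I is winning for II). -/
def WinRegII (G : PGame V) (v : V) : Prop :=
  ∃ s, G.LegalII s ∧ ∀ p, G.ConsII s v p → ¬ G.WinsI p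

end PGame


open Set

namespace PD

open scoped Classical

lemma infinite_shift {Q : ℕ → Prop} (N : ℕ) :
    {n | Q (n + N)}.Infinite ↔ {n | Q n}.Infinite := by
  constructor
  · intro h
    have himg : ((· + N) '' {n | Q (n + N)}).Infinite :=
      h.image (Set.injOn_of_injective (add_left_injective N))
    exact himg.mono (by rintro m ⟨k, hk, rfl⟩; exact hk)
  · intro h
    by_contra hf
    rw [Set.not_infinite] at hf
    refine h (Set.Finite.subset ((Set.finite_Iio N).union (hf.image (· + N))) ?_)
    intro m hm
    rcases lt_or_ge m N with h' | h'
    · exact Or.inl h'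
    · exact Or.inr ⟨m - N, by simpa [Nat.sub_add_cancel h'] using hm, Nat.sub_add_cancel h'⟩

lemma infinite_of_unbounded {Q : ℕ → Prop} (h : ∀ N, ∃ n, N ≤ n ∧ Q n) :
    {n | Q n}.Infinite := by
  by_contra hf
  rw [Set.not_infinite] at hf
  obtain ⟨b, hb⟩ := hf.bddAbove
  obtain ⟨n, hn, hQ⟩ := h (b + 1)
  exact absurd (hb hQ) (by omega)

lemma winsI_shift {V : Type*} (G : PGame V) (p : ℕ → V) (N : ℕ) :
    G.WinsI (fun k => p (k + N)) ↔ G.WinsI p := by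
  unfold PGame.WinsI
  constructor
  · rintro ⟨i, he, hinf, hfin⟩
    refine ⟨i, he, (infinite_shift N).1 hinf, fun j hj => ?_⟩
    have := hfin j hj
    rw [← Set.not_infinite] at this ⊢
    exact fun hi => this ((infinite_shift (Q := fun n => G.col (p n) = j) N).2 hi)
  · rintro ⟨i, he, hinf, hfin⟩
    refine ⟨i, he, (infinite_shift (Q := fun n => G.col (p n) = i) N).2 hinf, fun j hj => ?_⟩
    have := hfin j hj
    rw [← Set.not_infinite] at this ⊢
    exact fun hi => this ((infinite_shift (Q := fun n => G.col (p n) = j) N).1 hi)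

lemma least_inf_color {f : ℕ → ℕ} {D : ℕ} (hD : ∀ n, f n < D) :
    ∃ i, {n | f n = i}.Infinite := by
  by_contra h
  push_neg at h
  have hsub : (Set.univ : Set ℕ) ⊆ ⋃ i ∈ Finset.range D, {n | f n = i} := by
    intro n _
    exact Set.mem_biUnion (Finset.mem_range.2 (hD n)) rfl
  exact Set.infinite_univ
    (Set.Finite.subset (Set.Finite.biUnion (Finset.range D).finite_toSet fun i _ => h i) hsub)

lemma wins_iff_even_find {V : Type*} {G : PGame V} {p : ℕ → V}
    (hP : ∃ i, {n | G.col (p n) = i}.Infinite) :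
    G.WinsI p ↔ Even (Nat.find hP) := by
  constructor
  · rintro ⟨i, he, hinf, hfin⟩
    have h1 : Nat.find hP ≤ i := Nat.find_min' hP hinf
    have h2 : ¬ Nat.find hP < i := fun hlt => (Nat.find_spec hP) (hfin _ hlt)
    have : Nat.find hP = i := le_antisymm h1 (not_lt.1 h2)
    rwa [this]
  · intro he
    exact ⟨Nat.find hP, he, Nat.find_spec hP, fun j hj => Set.not_infinite.1 (Nat.find_min hP hj)⟩

lemma wins_flip {V : Type*} {G G' : PGame V} {p : ℕ → V} {D : ℕ}
    (hE : ∀ n, G.col (p n) = G'.col (p n) + 1) (hD : ∀ n, G.col (p n) < D) :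
    G'.WinsI p ↔ ¬ G.WinsI p := by
  have hP : ∃ i, {n | G.col (p n) = i}.Infinite := least_inf_color hD
  have hP' : ∃ i, {n | G'.col (p n) = i}.Infinite := by
    obtain ⟨i, hi⟩ := hP
    refine ⟨i - 1, hi.mono ?_⟩
    intro n hn
    simp only [Set.mem_setOf_eq] at hn ⊢
    have := hE n; omega
  have hμ1 : 1 ≤ Nat.find hP := by
    by_contra h0
    obtain ⟨m, hm⟩ := (Nat.find_spec hP).nonempty
    simp only [Set.mem_setOf_eq] at hm
    have := hE m; omega
  have key : Nat.find hP = Nat.find hP' + 1 := by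
    have hle : Nat.find hP ≤ Nat.find hP' + 1 := by
      apply Nat.find_min' hP
      have : {n | G.col (p n) = Nat.find hP' + 1} = {n | G'.col (p n) = Nat.find hP'} := by
        ext n; simp only [Set.mem_setOf_eq]; have := hE n; omega
      rw [this]; exact Nat.find_spec hP'
    have hge : Nat.find hP' ≤ Nat.find hP - 1 := by
      apply Nat.find_min' hP'
      have : {n | G'.col (p n) = Nat.find hP - 1} = {n | G.col (p n) = Nat.find hP} := by
        ext n; simp only [Set.mem_setOf_eq]; have := hE n; omega
      rw [this]; exact Nat.find_spec hP
    omega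
  rw [wins_iff_even_find hP', wins_iff_even_find hP, key, Nat.even_add_one, not_not]

section Plays

variable {V : Type*}

lemma hist_zero (p : ℕ → V) : PGame.hist p 0 = [p 0] := by
  simp [PGame.hist, List.ofFn_succ]

lemma hist_succ (p : ℕ → V) (n : ℕ) :
    PGame.hist p (n + 1) = PGame.hist p n ++ [p (n + 1)] := by
  unfold PGame.hist
  rw [List.ofFn_succ']
  simp [List.concat_eq_append]

lemma hist_getLast (p : ℕ → V) (n : ℕ) : (PGame.hist p n).getLast? = some (p n) := by
  cases n with
  | zero => simp [hist_zero]
  | succ n => rw [hist_succ, List.getLast?_append_cons]; rfl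

/-- The sequence of histories built by following the next-move function `F`. -/
def histSeq (F : List V → V) (x : V) : ℕ → List V :=
  fun n => Nat.rec [x] (fun _ h => h ++ [F h]) n

/-- The play built by following the next-move function `F`. -/
def hPlay (F : List V → V) (x : V) : ℕ → V :=
  fun n => Nat.rec x (fun n _ => F (histSeq F x n)) n

lemma hPlay_zero (F : List V → V) (x : V) : hPlay F x 0 = x := rfl

lemma histSeq_eq_hist (F : List V → V) (x : V) (n : ℕ) :
    histSeq F x n = PGame.hist (hPlay F x) n := by
  induction n with
  | zero => simp [histSeq, hPlay, hist_zero]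
  | succ n ih =>
      have h1 : histSeq F x (n + 1) = histSeq F x n ++ [F (histSeq F x n)] := rfl
      have h2 : hPlay F x (n + 1) = F (histSeq F x n) := rfl
      rw [h1, ih, hist_succ, h2, ih]

lemma hPlay_succ (F : List V → V) (x : V) (n : ℕ) :
    hPlay F x (n + 1) = F (PGame.hist (hPlay F x) n) := by
  have h2 : hPlay F x (n + 1) = F (histSeq F x n) := rfl
  rw [h2, histSeq_eq_hist]

lemma exists_combined_play (G : PGame V) (s₁ s₂ : List V → V)
    (hL1 : G.LegalI s₁) (hL2 : G.LegalII s₂) (x : V) :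
    ∃ p, G.ConsI s₁ x p ∧ G.ConsII s₂ x p := by
  classical
  set F : List V → V := fun h => if (h.getLast?.getD x) ∈ G.VI then s₁ h else s₂ h with hF
  set p := hPlay F x with hp
  have hstep : ∀ n, p (n + 1) = if p n ∈ G.VI then s₁ (PGame.hist p n) else s₂ (PGame.hist p n) := by
    intro n
    have := hPlay_succ F x n
    rw [hF] at this
    simp only [hist_getLast, Option.getD_some] at this
    exact this
  have hplay : G.IsPlay p := by
    intro n
    by_cases hv : p n ∈ G.VI
    · rw [hstep n, if_pos hv]
      exact hL1 _ _ (hist_getLast p n) hv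
    · rw [hstep n, if_neg hv]
      exact hL2 _ _ (hist_getLast p n) hv
  refine ⟨p, ⟨rfl, hplay, fun n hv => ?_⟩, ⟨rfl, hplay, fun n hv => ?_⟩⟩
  · rw [hstep n, if_pos hv]
  · rw [hstep n, if_neg hv]

/-- The play built from a positional next-move function. -/
def sPlay (F : V → V) (x : V) : ℕ → V := fun n => F^[n] x

lemma sPlay_zero (F : V → V) (x : V) : sPlay F x 0 = x := rfl

lemma sPlay_succ (F : V → V) (x : V) (n : ℕ) :
    sPlay F x (n + 1) = F (sPlay F x n) := Function.iterate_succ_apply' F n x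

end Plays

section Attractor

open OrdinalApprox OrderHom

variable {V : Type*} (G : PGame V) (C Z T : Set V)

/-- One step of the attractor operator for the player controlling `C`,
within arena `Z`, towards target `T`. -/
def attF : Set V →o Set V :=
  ⟨fun S => T ∪ {v | v ∈ Z ∧ v ∈ C ∧ ∃ w ∈ S, G.E v w}
      ∪ {v | v ∈ Z ∧ v ∉ C ∧ ∀ w ∈ Z, G.E v w → w ∈ S}, by
    intro S S' hS v hv
    rcases hv with (h | h) | h
    · exact Or.inl (Or.inl h)
    · obtain ⟨h1, h2, w, hw, hE⟩ := h
      exact Or.inl (Or.inr ⟨h1, h2, w, hS hw, hE⟩)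
    · exact Or.inr ⟨h.1, h.2.1, fun w hw hE => hS (h.2.2 w hw hE)⟩⟩

/-- The attractor. -/
def attr : Set V := OrderHom.lfp (attF G C Z T)

noncomputable def attrStage (o : Ordinal) : Set V := lfpApprox (attF G C Z T) ⊥ o

lemma attr_fixed : attF G C Z T (attr G C Z T) = attr G C Z T := OrderHom.map_lfp _

lemma attr_eq_stage :
    attr G C Z T = attrStage G C Z T (Cardinal.ord (Order.succ (Cardinal.mk (Set V)))) :=
  (lfpApprox_ord_eq_lfp _).symm

lemma stage_subset_attr (o : Ordinal) : attrStage G C Z T o ⊆ attr G C Z T :=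
  lfpApprox_le_of_mem_fixedPoints _ (attF G C Z T).isFixedPt_lfp bot_le o

lemma mem_stage_elim {v : V} {o : Ordinal} (h : v ∈ attrStage G C Z T o) :
    ∃ b < o, v ∈ attF G C Z T (attrStage G C Z T b) := by
  rw [attrStage, lfpApprox] at h
  simp only [Set.bot_eq_empty, Set.sup_eq_union, Set.iSup_eq_iUnion, Set.empty_union,
    Set.mem_iUnion, exists_prop] at h
  obtain ⟨b, hb, hvt⟩ := h
  exact ⟨b, hb, hvt⟩

noncomputable def attrRank (v : V) : Ordinal :=
  if h : v ∈ attr G C Z T then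
    Ordinal.lt_wf.min {o | v ∈ attrStage G C Z T o}
      ⟨_, (attr_eq_stage G C Z T) ▸ h⟩
  else 0

lemma attrRank_mem {v : V} (h : v ∈ attr G C Z T) :
    v ∈ attrStage G C Z T (attrRank G C Z T v) := by
  rw [attrRank, dif_pos h]
  exact Ordinal.lt_wf.min_mem {o | v ∈ attrStage G C Z T o} ⟨_, (attr_eq_stage G C Z T) ▸ h⟩

lemma attrRank_le {v : V} {o : Ordinal} (hv : v ∈ attr G C Z T)
    (h : v ∈ attrStage G C Z T o) : attrRank G C Z T v ≤ o := by
  rw [attrRank, dif_pos hv]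
  exact not_lt.1 (Ordinal.lt_wf.not_lt_min _ h)

lemma attr_step {v : V} (hv : v ∈ attr G C Z T) (hT : v ∉ T) :
    v ∈ Z ∧
    (v ∈ C → ∃ w, G.E v w ∧ w ∈ attr G C Z T ∧ attrRank G C Z T w < attrRank G C Z T v) ∧
    (v ∉ C → ∀ w ∈ Z, G.E v w →
        w ∈ attr G C Z T ∧ attrRank G C Z T w < attrRank G C Z T v) := by
  obtain ⟨b, hb, hmem⟩ := mem_stage_elim G C Z T (attrRank_mem G C Z T hv)
  rcases hmem with (h | h) | h
  · exact absurd h hT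
  · refine ⟨h.1, fun _ => ?_, fun hc => absurd h.2.1 hc⟩
    obtain ⟨w, hw, hE⟩ := h.2.2
    have hwa : w ∈ attr G C Z T := stage_subset_attr G C Z T _ hw
    exact ⟨w, hE, hwa, lt_of_le_of_lt (attrRank_le G C Z T hwa hw) hb⟩
  · refine ⟨h.1, fun hc => absurd hc h.2.1, fun _ w hwZ hE => ?_⟩
    have hw := h.2.2 w hwZ hE
    have hwa : w ∈ attr G C Z T := stage_subset_attr G C Z T _ hw
    exact ⟨hwa, lt_of_le_of_lt (attrRank_le G C Z T hwa hw) hb⟩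

noncomputable def attrStr (v : V) : V :=
  if h : ∃ w, G.E v w ∧ w ∈ attr G C Z T ∧ attrRank G C Z T w < attrRank G C Z T v then
    h.choose
  else v

lemma attrStr_spec {v : V} (hv : v ∈ attr G C Z T) (hC : v ∈ C) (hT : v ∉ T) :
    G.E v (attrStr G C Z T v) ∧ attrStr G C Z T v ∈ attr G C Z T ∧
      attrRank G C Z T (attrStr G C Z T v) < attrRank G C Z T v := by
  have h := (attr_step G C Z T hv hT).2.1 hC
  rw [attrStr, dif_pos h]
  exact h.choose_spec

lemma subset_attr : T ⊆ attr G C Z T := by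
  intro v hv
  rw [← attr_fixed]
  exact Or.inl (Or.inl hv)

lemma attr_subset_Z (hTZ : T ⊆ Z) : attr G C Z T ⊆ Z := by
  intro v hv
  rw [← attr_fixed] at hv
  rcases hv with (h | h) | h
  · exact hTZ h
  · exact h.1
  · exact h.1

lemma attr_of_controller {v w : V} (hvZ : v ∈ Z) (hvC : v ∈ C) (hE : G.E v w)
    (hw : w ∈ attr G C Z T) : v ∈ attr G C Z T := by
  rw [← attr_fixed]
  exact Or.inl (Or.inr ⟨hvZ, hvC, w, hw, hE⟩)

lemma attr_of_noncontroller {v : V} (hvZ : v ∈ Z) (hvC : v ∉ C)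
    (h : ∀ w ∈ Z, G.E v w → w ∈ attr G C Z T) : v ∈ attr G C Z T := by
  rw [← attr_fixed]
  exact Or.inr ⟨hvZ, hvC, h⟩

lemma compl_controller {v : V} (hv : v ∉ attr G C Z T) (hvZ : v ∈ Z) (hC : v ∈ C) :
    ∀ w, G.E v w → w ∉ attr G C Z T :=
  fun _ hE hw => hv (attr_of_controller G C Z T hvZ hC hE hw)

lemma compl_noncontroller {v : V} (hv : v ∉ attr G C Z T) (hvZ : v ∈ Z) (hC : v ∉ C) :
    ∃ w, w ∈ Z ∧ G.E v w ∧ w ∉ attr G C Z T := by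
  by_contra h
  push_neg at h
  exact hv (attr_of_noncontroller G C Z T hvZ hC fun w hwZ hE => h w hwZ hE)

lemma attr_reach {p : ℕ → V} (hp : G.IsPlay p) (hZ : ∀ n, p n ∈ Z)
    (hσ : ∀ n, p n ∈ attr G C Z T → p n ∈ C → p n ∉ T → p (n + 1) = attrStr G C Z T (p n))
    (h0 : p 0 ∈ attr G C Z T) : ∃ n, p n ∈ T := by
  have main : ∀ o : Ordinal, ∀ p : ℕ → V, G.IsPlay p → (∀ n, p n ∈ Z) →
      (∀ n, p n ∈ attr G C Z T → p n ∈ C → p n ∉ T → p (n + 1) = attrStr G C Z T (p n)) →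
      p 0 ∈ attr G C Z T → attrRank G C Z T (p 0) = o → ∃ n, p n ∈ T := by
    intro o
    induction o using Ordinal.induction with
    | h o IH =>
      intro p hp hZ hσ h0 hrk
      by_cases hT : p 0 ∈ T
      · exact ⟨0, hT⟩
      have hstep : p 1 ∈ attr G C Z T ∧ attrRank G C Z T (p 1) < o := by
        by_cases hC : p 0 ∈ C
        · have hs := attrStr_spec G C Z T h0 hC hT
          have h1 : p 1 = attrStr G C Z T (p 0) := hσ 0 h0 hC hT
          rw [h1]
          exact ⟨hs.2.1, hrk ▸ hs.2.2⟩
        · have hs := (attr_step G C Z T h0 hT).2.2 hC (p 1) (hZ 1) (hp 0)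
          exact ⟨hs.1, hrk ▸ hs.2⟩
      obtain ⟨n, hn⟩ := IH (attrRank G C Z T (p 1)) hstep.2 (fun k => p (k + 1))
          (fun k => hp (k + 1)) (fun k => hZ (k + 1)) (fun k => hσ (k + 1)) hstep.1 rfl
      exact ⟨n + 1, hn⟩
  exact main _ p hp hZ hσ h0 rfl

end Attractor

section Paradise

variable {V : Type*} (G : PGame V) (U : Set V)

/-- A paradise for player II: a trap for player I on which the positional strategy `τ`
wins for player II. -/
def Paradise (P : Set V) (τ : V → V) : Prop :=
  P ⊆ U ∧
  (∀ v ∈ P, v ∈ G.VI → ∀ w, w ∈ U → G.E v w → w ∈ P) ∧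
  (∀ v ∈ P, v ∉ G.VI → G.E v (τ v) ∧ τ v ∈ P) ∧
  (∀ p, p 0 ∈ P → G.IsPlay p → (∀ n, p n ∈ U) →
    (∀ n, p n ∉ G.VI → p (n + 1) = τ (p n)) → ¬ G.WinsI p)

variable {G U}

lemma paradise_stay {P : Set V} {τ : V → V} (h : Paradise G U P τ) {p : ℕ → V}
    (h0 : p 0 ∈ P) (hp : G.IsPlay p) (hU : ∀ n, p n ∈ U)
    (hτ : ∀ n, p n ∈ P → p n ∉ G.VI → p (n + 1) = τ (p n)) : ∀ n, p n ∈ P := by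
  intro n
  induction n with
  | zero => exact h0
  | succ n ih =>
      by_cases hv : p n ∈ G.VI
      · exact h.2.1 _ ih hv _ (hU (n + 1)) (hp n)
      · rw [hτ n ih hv]; exact (h.2.2.1 _ ih hv).2

lemma paradise_notWins {P : Set V} {τ : V → V} (h : Paradise G U P τ) {p : ℕ → V}
    (h0 : p 0 ∈ P) (hp : G.IsPlay p) (hU : ∀ n, p n ∈ U)
    (hτ : ∀ n, p n ∈ P → p n ∉ G.VI → p (n + 1) = τ (p n)) : ¬ G.WinsI p := by
  have hst := paradise_stay h h0 hp hU hτ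
  exact h.2.2.2 p h0 hp hU fun n hv => hτ n (hst n) hv

variable (G U)

/-- Index type for all paradises. -/
def ParadiseIdx := {q : Set V × (V → V) // Paradise G U q.1 q.2}

/-- Union of all paradises. -/
def maxParadise : Set V := {v | ∃ i : ParadiseIdx G U, v ∈ i.1.1}

noncomputable def pidx (v : V) (h : v ∈ maxParadise G U) : ParadiseIdx G U :=
  (IsWellFounded.wf (r := (WellOrderingRel : ParadiseIdx G U → ParadiseIdx G U → Prop))).min
    {i | v ∈ i.1.1} h

lemma pidx_mem {v : V} (h : v ∈ maxParadise G U) : v ∈ (pidx G U v h).1.1 :=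
  WellFounded.min_mem _ {i : ParadiseIdx G U | v ∈ i.1.1} h

lemma pidx_min {v : V} (h : v ∈ maxParadise G U) {i : ParadiseIdx G U} (hi : v ∈ i.1.1) :
    ¬ WellOrderingRel i (pidx G U v h) :=
  WellFounded.not_lt_min _ {i : ParadiseIdx G U | v ∈ i.1.1} hi

noncomputable def maxτ (v : V) : V :=
  if h : v ∈ maxParadise G U then (pidx G U v h).1.2 v else v

lemma maxParadise_paradise : Paradise G U (maxParadise G U) (maxτ G U) := by
  classical
  refine ⟨?_, ?_, ?_, ?_⟩
  · rintro v ⟨i, hv⟩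
    exact i.2.1 hv
  · rintro v hv hVI w hwU hE
    exact ⟨pidx G U v hv, (pidx G U v hv).2.2.1 v (pidx_mem G U hv) hVI w hwU hE⟩
  · rintro v hv hVI
    rw [maxτ, dif_pos hv]
    obtain ⟨hE, hP⟩ := (pidx G U v hv).2.2.2.1 v (pidx_mem G U hv) hVI
    exact ⟨hE, (pidx G U v hv), hP⟩
  · intro p h0 hp hU hτ
    have hmem : ∀ n, p n ∈ maxParadise G U := by
      intro n
      induction n with
      | zero => exact h0
      | succ n ih =>
          by_cases hv : p n ∈ G.VI
          · exact ⟨pidx G U (p n) ih,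
              (pidx G U (p n) ih).2.2.1 _ (pidx_mem G U ih) hv _ (hU (n + 1)) (hp n)⟩
          · rw [hτ n hv, maxτ, dif_pos ih]
            exact ⟨pidx G U (p n) ih, ((pidx G U (p n) ih).2.2.2.1 _ (pidx_mem G U ih) hv).2⟩
    set r : ParadiseIdx G U → ParadiseIdx G U → Prop := WellOrderingRel with hr
    have wf : WellFounded r := IsWellFounded.wf
    set idx : ℕ → ParadiseIdx G U := fun n => pidx G U (p n) (hmem n) with hidx
    have hstep : ∀ n, p (n + 1) ∈ (idx n).1.1 := by
      intro n
      by_cases hv : p n ∈ G.VI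
      · exact (idx n).2.2.1 _ (pidx_mem G U (hmem n)) hv _ (hU (n + 1)) (hp n)
      · rw [hτ n hv, maxτ, dif_pos (hmem n)]
        exact ((idx n).2.2.2.1 _ (pidx_mem G U (hmem n)) hv).2
    have hmono : ∀ n, idx (n + 1) = idx n ∨ r (idx (n + 1)) (idx n) := by
      intro n
      have hnot : ¬ r (idx n) (idx (n + 1)) := pidx_min G U (hmem (n + 1)) (hstep n)
      rcases trichotomous_of r (idx (n + 1)) (idx n) with h' | h' | h'
      · exact Or.inr h'
      · exact Or.inl h'
      · exact absurd h' hnot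
    obtain ⟨m, hm⟩ := wf.min_mem (Set.range idx) ⟨idx 0, 0, rfl⟩
    have hconst : ∀ n, m ≤ n → idx n = idx m := by
      intro n hn
      induction n with
      | zero => rw [Nat.le_zero.1 hn]
      | succ n ih =>
          rcases Nat.lt_or_ge m (n + 1) with h' | h'
          · have hin := ih (by omega)
            rcases hmono n with h2 | h2
            · rw [h2, hin]
            · exfalso
              rw [hin, hm] at h2
              exact wf.not_lt_min (Set.range idx) ⟨n + 1, rfl⟩ h2
          · have : m = n + 1 := by omega
            rw [this]
    set q : ℕ → V := fun k => p (m + k) with hq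
    have hnw : ¬ G.WinsI q := by
      apply (idx m).2.2.2.2 q (pidx_mem G U (hmem m)) (fun k => hp (m + k))
        (fun k => hU (m + k)) ?_
      intro k hk
      show p (m + k + 1) = (idx m).1.2 (p (m + k))
      rw [hτ (m + k) hk, maxτ, dif_pos (hmem (m + k))]
      have h5 : pidx G U (p (m + k)) (hmem (m + k)) = idx m := hconst (m + k) (by omega)
      rw [h5]
    intro hw
    have hws : G.WinsI (fun k => p (k + m)) := (winsI_shift G p m).2 hw
    rw [show (fun k => p (k + m)) = q from funext fun k => by rw [hq]; simp [Nat.add_comm]] at hws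
    exact hnw hws

end Paradise

section Main

variable {V : Type*}

/-- Positional determinacy data for the subgame of `G` on `U`. -/
def Det (G : PGame V) (U : Set V) : Prop :=
  ∃ W : Set V, W ⊆ U ∧ ∃ σ τ : V → V,
    (∀ v ∈ U, v ∈ G.VI → G.E v (σ v) ∧ σ v ∈ U) ∧
    (∀ v ∈ U, v ∉ G.VI → G.E v (τ v) ∧ τ v ∈ U) ∧
    (∀ p : ℕ → V, p 0 ∈ W → G.IsPlay p → (∀ n, p n ∈ U) →
      (∀ n, p n ∈ G.VI → p (n + 1) = σ (p n)) → G.WinsI p) ∧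
    (∀ p : ℕ → V, p 0 ∈ U → p 0 ∉ W → G.IsPlay p → (∀ n, p n ∈ U) →
      (∀ n, p n ∉ G.VI → p (n + 1) = τ (p n)) → ¬ G.WinsI p)

lemma no_escape {H : PGame V} {S W : Set V} {σ τ : V → V} (hWS : W ⊆ S)
    (hσ : ∀ v ∈ S, v ∈ H.VI → H.E v (σ v) ∧ σ v ∈ S)
    (hτ : ∀ v ∈ S, v ∉ H.VI → H.E v (τ v) ∧ τ v ∈ S)
    (hwin : ∀ p : ℕ → V, p 0 ∈ W → H.IsPlay p → (∀ n, p n ∈ S) →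
      (∀ n, p n ∈ H.VI → p (n + 1) = σ (p n)) → H.WinsI p)
    (hlose : ∀ p : ℕ → V, p 0 ∈ S → p 0 ∉ W → H.IsPlay p → (∀ n, p n ∈ S) →
      (∀ n, p n ∉ H.VI → p (n + 1) = τ (p n)) → ¬ H.WinsI p) :
    (∀ v ∈ W, v ∈ H.VI → σ v ∈ W) ∧
    (∀ v ∈ W, v ∉ H.VI → ∀ w ∈ S, H.E v w → w ∈ W) := by
  classical
  have comb : ∀ x ∈ S, ∃ p : ℕ → V, p 0 = x ∧ H.IsPlay p ∧ (∀ n, p n ∈ S) ∧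
      (∀ n, p n ∈ H.VI → p (n + 1) = σ (p n)) ∧
      (∀ n, p n ∉ H.VI → p (n + 1) = τ (p n)) := by
    intro x hx
    set F : V → V := fun v => if v ∈ H.VI then σ v else τ v with hF
    have hS : ∀ n, sPlay F x n ∈ S := by
      intro n
      induction n with
      | zero => exact hx
      | succ n ih =>
          rw [sPlay_succ]
          by_cases hv : sPlay F x n ∈ H.VI
          · rw [hF] at hv ⊢; simp only [if_pos hv]; exact (hσ _ ih hv).2
          · rw [hF] at hv ⊢; simp only [if_neg hv]; exact (hτ _ ih hv).2
    refine ⟨sPlay F x, rfl, ?_, hS, ?_, ?_⟩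
    · intro n
      rw [sPlay_succ]
      by_cases hv : sPlay F x n ∈ H.VI
      · rw [hF] at hv ⊢; simp only [if_pos hv]; exact (hσ _ (hS n) hv).1
      · rw [hF] at hv ⊢; simp only [if_neg hv]; exact (hτ _ (hS n) hv).1
    · intro n hv; rw [sPlay_succ]; rw [hF] at hv ⊢; simp only [if_pos hv]
    · intro n hv; rw [sPlay_succ]; rw [hF] at hv ⊢; simp only [if_neg hv]
  have key : ∀ v ∈ W, ∀ w ∈ S, H.E v w →
      ((v ∈ H.VI ∧ w = σ v) ∨ v ∉ H.VI) → w ∈ W := by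
    intro v hv w hwS hE hcase
    by_contra hw
    obtain ⟨p, hp0, hplay, hpS, hpσ, hpτ⟩ := comb w hwS
    have hnw : ¬ H.WinsI p := hlose p (hp0 ▸ hwS) (hp0 ▸ hw) hplay hpS hpτ
    set q : ℕ → V := fun n => Nat.casesOn n v (fun k => p k) with hq
    have hq0 : q 0 = v := rfl
    have hqs : ∀ k, q (k + 1) = p k := fun k => rfl
    have hwq : H.WinsI q := by
      apply hwin q hv
      · intro n
        cases n with
        | zero => rw [hq0, hqs, hp0]; exact hE
        | succ k => rw [hqs, hqs]; exact hplay k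
      · intro n
        cases n with
        | zero => exact hWS hv
        | succ k => rw [hqs]; exact hpS k
      · intro n hn
        cases n with
        | zero =>
            rw [hq0] at hn
            rcases hcase with ⟨_, hww⟩ | hnv
            · rw [hqs, hp0, hww]; rfl
            · exact absurd hn hnv
        | succ k => rw [hqs] at hn ⊢; rw [hqs, hpσ k hn]
    have : H.WinsI (fun k => q (k + 1)) := (winsI_shift H q 1).2 hwq
    rw [show (fun k => q (k + 1)) = p from funext fun k => rfl] at this
    exact hnw this
  constructor
  · intro v hv hVI
    have h1 := hσ v (hWS hv) hVI
    exact key v hv (σ v) h1.2 h1.1 (Or.inl ⟨hVI, rfl⟩)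
  · intro v hv hVI w hwS hE
    exact key v hv w hwS hE (Or.inr hVI)

lemma main_det (d : ℕ) : ∀ (G : PGame V) (U : Set V),
    (∀ v ∈ U, ∃ w ∈ U, G.E v w) → (∀ v ∈ U, G.col v < d) → Det G U := by
  induction d with
  | zero =>
      intro G U htot hcol
      exact ⟨∅, Set.empty_subset _, id, id,
        fun v hv _ => absurd (hcol v hv) (Nat.not_lt_zero _),
        fun v hv _ => absurd (hcol v hv) (Nat.not_lt_zero _),
        fun p hp0 _ _ _ => absurd hp0 (Set.notMem_empty _),
        fun p hp0 _ _ _ _ => absurd (hcol _ hp0) (Nat.not_lt_zero _)⟩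
  | succ d IH =>
      intro G U htot hcol
      classical
      -- the maximal paradise for player II
      set Pm : Set V := maxParadise G U with hPm
      set τm : V → V := maxτ G U with hτm
      have hpar : Paradise G U Pm τm := maxParadise_paradise G U
      have max_spec : ∀ P τ', Paradise G U P τ' → P ⊆ Pm :=
        fun P τ' h v hv => ⟨⟨(P, τ'), h⟩, hv⟩
      -- Step 1 : the II-attractor of Pm is Pm itself
      have hYpar : Paradise G U (attr G G.VIᶜ U Pm)
          (fun v => if v ∈ Pm then τm v else attrStr G G.VIᶜ U Pm v) := by
        refine ⟨attr_subset_Z G _ _ _ hpar.1, ?_, ?_, ?_⟩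
        · intro v hv hVI w hwU hE
          by_cases hP : v ∈ Pm
          · exact subset_attr G _ _ _ (hpar.2.1 v hP hVI w hwU hE)
          · have h2 := (attr_step G G.VIᶜ U Pm hv hP).2.2 (by simp [hVI]) w hwU hE
            exact h2.1
        · intro v hv hVI
          by_cases hP : v ∈ Pm
          · simp only [if_pos hP]
            obtain ⟨hE, hP2⟩ := hpar.2.2.1 v hP hVI
            exact ⟨hE, subset_attr G _ _ _ hP2⟩
          · simp only [if_neg hP]
            have hs := attrStr_spec G G.VIᶜ U Pm hv (by simp [hVI]) hP
            exact ⟨hs.1, hs.2.1⟩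
        · intro p hp0 hplay hU hcons
          obtain ⟨n, hn⟩ := attr_reach G G.VIᶜ U Pm hplay hU (fun k hk1 hk2 hk3 => by
            rw [hcons k (by simpa using hk2)]; simp only [if_neg hk3]) hp0
          have hstay : ∀ k, p (n + k) ∈ Pm := by
            intro k
            induction k with
            | zero => exact hn
            | succ k ih =>
                by_cases hv : p (n + k) ∈ G.VI
                · exact hpar.2.1 _ ih hv _ (hU (n + k + 1)) (hplay (n + k))
                · have := hcons (n + k) hv
                  simp only [if_pos ih] at this
                  show p (n + k + 1) ∈ Pm
                  rw [this]
                  exact (hpar.2.2.1 _ ih hv).2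
          have hnw : ¬ G.WinsI (fun k => p (n + k)) := by
            apply paradise_notWins hpar hn (fun k => hplay (n + k)) (fun k => hU (n + k))
            intro k hk1 hk2
            show p (n + k + 1) = τm (p (n + k))
            have := hcons (n + k) hk2
            simp only [if_pos hk1] at this
            exact this
          intro hw
          have hws := (winsI_shift G p n).2 hw
          rw [show (fun k => p (k + n)) = (fun k => p (n + k)) from
            funext fun k => by rw [Nat.add_comm]] at hws
          exact hnw hws
      have hY : attr G G.VIᶜ U Pm = Pm :=
        le_antisymm (max_spec _ _ hYpar) (subset_attr G _ _ _)
      -- Z₀ : the candidate winning region for player I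
      set Z₀ : Set V := U \ Pm with hZ₀
      have hZU : Z₀ ⊆ U := Set.diff_subset
      have hIIstay : ∀ v ∈ Z₀, v ∉ G.VI → ∀ w, G.E v w → w ∉ Pm := by
        intro v hv hVI w hE
        have hv2 : v ∉ attr G G.VIᶜ U Pm := by rw [hY]; exact hv.2
        have := compl_controller G G.VIᶜ U Pm hv2 hv.1 (by simp [hVI]) w hE
        rwa [hY] at this
      have hItot : ∀ v ∈ Z₀, v ∈ G.VI → ∃ w, w ∈ Z₀ ∧ G.E v w := by
        intro v hv hVI
        have hv2 : v ∉ attr G G.VIᶜ U Pm := by rw [hY]; exact hv.2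
        obtain ⟨w, hwU, hE, hwP⟩ := compl_noncontroller G G.VIᶜ U Pm hv2 hv.1
          (by simp [hVI])
        exact ⟨w, ⟨hwU, hY ▸ hwP⟩, hE⟩
      have hZ₀tot : ∀ v ∈ Z₀, ∃ w, w ∈ Z₀ ∧ G.E v w := by
        intro v hv
        by_cases hVI : v ∈ G.VI
        · exact hItot v hv hVI
        · obtain ⟨w, hwU, hE⟩ := htot v hv.1
          exact ⟨w, ⟨hwU, hIIstay v hv hVI w hE⟩, hE⟩
      -- Step 2 : attractor to the 0-coloured vertices
      set P₀ : Set V := {v | v ∈ Z₀ ∧ G.col v = 0} with hP₀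
      have hP₀Z : P₀ ⊆ Z₀ := fun v hv => hv.1
      set A : Set V := attr G G.VI Z₀ P₀ with hA
      have hAZ : A ⊆ Z₀ := attr_subset_Z G _ _ _ hP₀Z
      set S : Set V := Z₀ \ A with hS
      have hSZ : S ⊆ Z₀ := Set.diff_subset
      have hStot : ∀ v ∈ S, ∃ w, w ∈ S ∧ G.E v w := by
        intro v hv
        by_cases hVI : v ∈ G.VI
        · obtain ⟨w, hwZ, hE⟩ := hItot v hv.1 hVI
          have hwA := compl_controller G G.VI Z₀ P₀ hv.2 hv.1 hVI w hE
          exact ⟨w, ⟨hwZ, hwA⟩, hE⟩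
        · obtain ⟨w, hwZ, hE, hwA⟩ := compl_noncontroller G G.VI Z₀ P₀ hv.2 hv.1 hVI
          exact ⟨w, ⟨hwZ, hwA⟩, hE⟩
      have hcolS : ∀ v ∈ S, 1 ≤ G.col v := by
        intro v hv
        by_contra h
        exact hv.2 (subset_attr G G.VI Z₀ P₀ ⟨hv.1, by omega⟩)
      -- Step 3 : solve the subgame on S for the flipped game
      set G' : PGame V := ⟨G.VIᶜ, G.E, fun v => G.col v - 1⟩ with hG'
      obtain ⟨W', hW'S, σ', τ', hσ', hτ', hwin', hlose'⟩ :=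
        IH G' S (fun v hv => by
          obtain ⟨w, hwS, hE⟩ := hStot v hv
          exact ⟨w, hwS, hE⟩)
          (fun v hv => by
            have h1 := hcolS v hv
            have h2 := hcol v (hZU (hSZ hv))
            show G.col v - 1 < d
            omega)
      have flip : ∀ q : ℕ → V, (∀ k, q k ∈ S) → (G'.WinsI q ↔ ¬ G.WinsI q) := by
        intro q hq
        apply wins_flip (D := d + 1)
        · intro k
          have h1 : 1 ≤ G.col (q k) := hcolS _ (hq k)
          show G.col (q k) = G.col (q k) - 1 + 1
          omega
        · intro k
          exact hcol _ (hZU (hSZ (hq k)))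
      -- Step 4 : no escape from W'
      obtain ⟨hesc1, hesc2⟩ := no_escape hW'S hσ' hτ' hwin' hlose'
      -- Step 5 : W' is empty
      have hW'empty : W' = ∅ := by
        have hpar2 : Paradise G U (Pm ∪ W') (fun v => if v ∈ Pm then τm v else σ' v) := by
          refine ⟨Set.union_subset hpar.1 (fun v hv => hZU (hSZ (hW'S hv))), ?_, ?_, ?_⟩
          · intro v hv hVI w hwU hE
            rcases hv with hv | hv
            · exact Or.inl (hpar.2.1 v hv hVI w hwU hE)
            · by_cases hwP : w ∈ Pm
              · exact Or.inl hwP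
              · have hvS : v ∈ S := hW'S hv
                have hwA : w ∉ A := compl_controller G G.VI Z₀ P₀ hvS.2 hvS.1 hVI w hE
                have hwS : w ∈ S := ⟨⟨hwU, hwP⟩, hwA⟩
                exact Or.inr (hesc2 v hv (by simp [hG', hVI]) w hwS hE)
          · intro v hv hVI
            rcases hv with hv | hv
            · simp only [if_pos hv]
              obtain ⟨hE, hP⟩ := hpar.2.2.1 v hv hVI
              exact ⟨hE, Or.inl hP⟩
            · have hvS : v ∈ S := hW'S hv
              have hvP : v ∉ Pm := fun h => hvS.1.2 h
              simp only [if_neg hvP]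
              have h1 := hσ' v hvS (by simp [hG', hVI])
              exact ⟨h1.1, Or.inr (hesc1 v hv (by simp [hG', hVI]))⟩
          · intro p hp0 hplay hU hcons
            have hstay : ∀ n, p n ∈ Pm ∪ W' := by
              intro n
              induction n with
              | zero => exact hp0
              | succ n ih =>
                  by_cases hVI : p n ∈ G.VI
                  · rcases ih with hv | hv
                    · exact Or.inl (hpar.2.1 _ hv hVI _ (hU (n + 1)) (hplay n))
                    · by_cases hwP : p (n + 1) ∈ Pm
                      · exact Or.inl hwP
                      · have hvS : p n ∈ S := hW'S hv
                        have hwA : p (n + 1) ∉ A :=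
                          compl_controller G G.VI Z₀ P₀ hvS.2 hvS.1 hVI _ (hplay n)
                        exact Or.inr (hesc2 _ hv (by simp [hG', hVI]) _
                          ⟨⟨hU (n + 1), hwP⟩, hwA⟩ (hplay n))
                  · rcases ih with hv | hv
                    · rw [hcons n hVI]; simp only [if_pos hv]
                      exact Or.inl (hpar.2.2.1 _ hv hVI).2
                    · have hvP : p n ∉ Pm := fun h => (hW'S hv).1.2 h
                      rw [hcons n hVI]; simp only [if_neg hvP]
                      exact Or.inr (hesc1 _ hv (by simp [hG', hVI]))
            by_cases hever : ∃ n, p n ∈ Pm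
            · obtain ⟨n, hn⟩ := hever
              have hstay2 : ∀ k, p (n + k) ∈ Pm := by
                intro k
                induction k with
                | zero => exact hn
                | succ k ih =>
                    by_cases hVI : p (n + k) ∈ G.VI
                    · exact hpar.2.1 _ ih hVI _ (hU (n + k + 1)) (hplay (n + k))
                    · have := hcons (n + k) hVI
                      simp only [if_pos ih] at this
                      show p (n + k + 1) ∈ Pm
                      rw [this]
                      exact (hpar.2.2.1 _ ih hVI).2
              have hnw : ¬ G.WinsI (fun k => p (n + k)) := by
                apply paradise_notWins hpar hn (fun k => hplay (n + k)) (fun k => hU (n + k))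
                intro k hk1 hk2
                show p (n + k + 1) = τm (p (n + k))
                have := hcons (n + k) hk2
                simp only [if_pos hk1] at this
                exact this
              intro hw
              have hws := (winsI_shift G p n).2 hw
              rw [show (fun k => p (k + n)) = (fun k => p (n + k)) from
                funext fun k => by rw [Nat.add_comm]] at hws
              exact hnw hws
            · push_neg at hever
              have hW'mem : ∀ n, p n ∈ W' := by
                intro n
                rcases hstay n with h | h
                · exact absurd h (hever n)
                · exact h
              have hSmem : ∀ n, p n ∈ S := fun n => hW'S (hW'mem n)
              have hw' : G'.WinsI p := by
                apply hwin' p (hW'mem 0) hplay hSmem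
                intro n hn
                have hVI : p n ∉ G.VI := by simpa [hG'] using hn
                have := hcons n hVI
                simp only [if_neg (hever n)] at this
                exact this
              exact ((flip p hSmem).1 hw')
        have hsub := max_spec _ _ hpar2
        ext v
        simp only [Set.mem_empty_iff_false, iff_false]
        intro hv
        exact (hW'S hv).1.2 (hsub (Or.inr hv))
      -- Step 6 : assemble the final strategies
      set chZ : V → V := fun v => if h : ∃ w, w ∈ Z₀ ∧ G.E v w then h.choose else v with hchZ
      have hchZspec : ∀ v, (∃ w, w ∈ Z₀ ∧ G.E v w) → chZ v ∈ Z₀ ∧ G.E v (chZ v) := by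
        intro v h
        rw [hchZ]; simp only [dif_pos h]; exact h.choose_spec
      set chU : V → V := fun v => if h : ∃ w, w ∈ U ∧ G.E v w then h.choose else v with hchU
      have hchUspec : ∀ v, (∃ w, w ∈ U ∧ G.E v w) → chU v ∈ U ∧ G.E v (chU v) := by
        intro v h
        rw [hchU]; simp only [dif_pos h]; exact h.choose_spec
      set σA : V → V := attrStr G G.VI Z₀ P₀ with hσA
      set σf : V → V := fun v =>
        if v ∈ S then τ' v
        else if v ∈ A ∧ v ∉ P₀ then σA v
        else if v ∈ Z₀ then chZ v else chU v with hσf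
      set τf : V → V := fun v => if v ∈ Pm then τm v else chU v with hτf
      refine ⟨Z₀, hZU, σf, τf, ?_, ?_, ?_, ?_⟩
      · -- legality of σf
        intro v hvU hVI
        by_cases h1 : v ∈ S
        · simp only [hσf, if_pos h1]
          have := hτ' v h1 (by simp [hG', hVI])
          exact ⟨this.1, hZU (hSZ this.2)⟩
        · by_cases h2 : v ∈ A ∧ v ∉ P₀
          · simp only [hσf, if_neg h1, if_pos h2]
            have hs := attrStr_spec G G.VI Z₀ P₀ h2.1 hVI h2.2
            exact ⟨hs.1, hZU (hAZ hs.2.1)⟩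
          · by_cases h3 : v ∈ Z₀
            · simp only [hσf, if_neg h1, if_neg h2, if_pos h3]
              have := hchZspec v (hZ₀tot v h3)
              exact ⟨this.2, hZU this.1⟩
            · simp only [hσf, if_neg h1, if_neg h2, if_neg h3]
              have := hchUspec v (by
                obtain ⟨w, hwU, hE⟩ := htot v hvU
                exact ⟨w, hwU, hE⟩)
              exact ⟨this.2, this.1⟩
      · -- legality of τf
        intro v hvU hVI
        by_cases h1 : v ∈ Pm
        · simp only [hτf, if_pos h1]
          have := hpar.2.2.1 v h1 hVI
          exact ⟨this.1, hpar.1 this.2⟩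
        · simp only [hτf, if_neg h1]
          have := hchUspec v (by
            obtain ⟨w, hwU, hE⟩ := htot v hvU
            exact ⟨w, hwU, hE⟩)
          exact ⟨this.2, this.1⟩
      · -- player I wins from Z₀ with σf
        intro p hp0 hplay hU hcons
        have hstayZ : ∀ n, p n ∈ Z₀ := by
          intro n
          induction n with
          | zero => exact hp0
          | succ n ih =>
              by_cases hVI : p n ∈ G.VI
              · have := hcons n hVI
                by_cases h1 : p n ∈ S
                · simp only [hσf, if_pos h1] at this
                  rw [this]
                  exact hSZ (hτ' _ h1 (by simp [hG', hVI])).2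
                · by_cases h2 : p n ∈ A ∧ p n ∉ P₀
                  · simp only [hσf, if_neg h1, if_pos h2] at this
                    rw [this]
                    exact hAZ (attrStr_spec G G.VI Z₀ P₀ h2.1 hVI h2.2).2.1
                  · simp only [hσf, if_neg h1, if_neg h2, if_pos ih] at this
                    rw [this]
                    exact (hchZspec _ (hZ₀tot _ ih)).1
              · refine ⟨hU (n + 1), hIIstay _ ih hVI _ (hplay n)⟩
        by_cases hinf : ∀ N, ∃ n, N ≤ n ∧ p n ∈ A
        · -- player I attracts to colour 0 infinitely often
          have hP₀inf : ∀ N, ∃ n, N ≤ n ∧ p n ∈ P₀ := by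
            intro N
            obtain ⟨n, hNn, hnA⟩ := hinf N
            obtain ⟨k, hk⟩ := attr_reach G G.VI Z₀ P₀ (p := fun k => p (n + k))
              (fun k => hplay (n + k)) (fun k => hstayZ (n + k)) (fun k hk1 hk2 hk3 => by
                show p (n + k + 1) = σA (p (n + k))
                have := hcons (n + k) hk2
                have hnS : p (n + k) ∉ S := fun h => h.2 hk1
                simp only [hσf, if_neg hnS, if_pos (show p (n + k) ∈ A ∧ p (n + k) ∉ P₀ from ⟨hk1, hk3⟩)] at this
                exact this) hnA
            exact ⟨n + k, by omega, hk⟩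
          refine ⟨0, Even.zero, ?_, fun j hj => absurd hj (Nat.not_lt_zero j)⟩
          apply Set.Infinite.mono (s := {n | p n ∈ P₀})
          · intro n hn
            exact hn.2
          · exact infinite_of_unbounded hP₀inf
        · -- the play eventually stays in S, where player I wins via the subgame
          push_neg at hinf
          obtain ⟨N, hN⟩ := hinf
          have hSmem : ∀ k, p (N + k) ∈ S := by
            intro k
            exact ⟨hstayZ (N + k), hN (N + k) (by omega)⟩
          have hnw' : ¬ G'.WinsI (fun k => p (N + k)) := by
            apply hlose' _ (hSmem 0) ?_ (fun k => hplay (N + k)) hSmem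
            · intro k hk
              have hVI : p (N + k) ∈ G.VI := by simpa [hG'] using hk
              show p (N + k + 1) = τ' (p (N + k))
              have := hcons (N + k) hVI
              simp only [hσf, if_pos (hSmem k)] at this
              exact this
            · rw [hW'empty]
              exact Set.notMem_empty _
          have hwq : G.WinsI (fun k => p (N + k)) := by
            by_contra hq
            exact hnw' ((flip _ hSmem).2 hq)
          have := (winsI_shift G p N).1 (by
            rw [show (fun k => p (k + N)) = (fun k => p (N + k)) from
              funext fun k => by rw [Nat.add_comm]]
            exact hwq)
          exact this
      · -- player II wins from U \ Z₀ = Pm with τf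
        intro p hp0U hp0 hplay hU hcons
        have hp0P : p 0 ∈ Pm := by
          by_contra h
          exact hp0 ⟨hp0U, h⟩
        apply paradise_notWins hpar hp0P hplay hU
        intro n h1 h2
        have := hcons n h2
        simp only [hτf, if_pos h1] at this
        exact this

end Main

end PD

/-- Positional determinacy of parity games: the winning regions partition the vertices,
and each player has a uniform memoryless winning strategy. -/
theorem parity_positional_determinacy {V : Type*} (d : ℕ) (G : PGame V)
    (htot : ∀ v, ∃ w, G.E v w) (hcol : ∀ v, G.col v < d) :
    (∀ v, (G.WinRegI v ∨ G.WinRegII v) ∧ ¬(G.WinRegI v ∧ G.WinRegII v)) ∧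
    (∃ s : V → V, (∀ v ∈ G.VI, G.E v (s v)) ∧
      ∀ v, G.WinRegI v → ∀ p : ℕ → V, p 0 = v → G.IsPlay p →
        (∀ n, p n ∈ G.VI → p (n + 1) = s (p n)) → G.WinsI p) ∧
    (∃ s : V → V, (∀ v ∉ G.VI, G.E v (s v)) ∧
      ∀ v, G.WinRegII v → ∀ p : ℕ → V, p 0 = v → G.IsPlay p →
        (∀ n, p n ∉ G.VI → p (n + 1) = s (p n)) → ¬ G.WinsI p) := by
  classical
  obtain ⟨W, -, σ, τ, hσ, hτ, hwin, hlose⟩ :=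
    PD.main_det d G Set.univ
      (fun v _ => (htot v).imp fun w hw => ⟨Set.mem_univ w, hw⟩)
      (fun v _ => hcol v)
  have hregI : ∀ v ∈ W, G.WinRegI v := by
    intro v hv
    refine ⟨fun h => σ (h.getLastD v), ?_, ?_⟩
    · intro h w hlast hwVI
      have hw : h.getLastD v = w := by
        rw [List.getLastD_eq_getLast?, hlast]; rfl
      show G.E w (σ (h.getLastD v))
      rw [hw]
      exact (hσ w (Set.mem_univ w) hwVI).1
    · rintro p ⟨hp0, hplay, hcons⟩
      apply hwin p (by rw [hp0]; exact hv) hplay (fun n => Set.mem_univ _)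
      intro n hn
      rw [hcons n hn]
      simp only [List.getLastD_eq_getLast?, PD.hist_getLast, Option.getD_some]
  have hregII : ∀ v, v ∉ W → G.WinRegII v := by
    intro v hv
    refine ⟨fun h => τ (h.getLastD v), ?_, ?_⟩
    · intro h w hlast hwVI
      have hw : h.getLastD v = w := by
        rw [List.getLastD_eq_getLast?, hlast]; rfl
      show G.E w (τ (h.getLastD v))
      rw [hw]
      exact (hτ w (Set.mem_univ w) hwVI).1
    · rintro p ⟨hp0, hplay, hcons⟩
      apply hlose p (Set.mem_univ _) (by rw [hp0]; exact hv) hplay (fun n => Set.mem_univ _)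
      intro n hn
      rw [hcons n hn]
      simp only [List.getLastD_eq_getLast?, PD.hist_getLast, Option.getD_some]
  have hnotboth : ∀ v, ¬ (G.WinRegI v ∧ G.WinRegII v) := by
    rintro v ⟨⟨s₁, hL1, hw1⟩, ⟨s₂, hL2, hw2⟩⟩
    obtain ⟨p, hc1, hc2⟩ := PD.exists_combined_play G s₁ s₂ hL1 hL2 v
    exact hw2 p hc2 (hw1 p hc1)
  refine ⟨?_, ⟨σ, ?_, ?_⟩, ⟨τ, ?_, ?_⟩⟩
  · intro v
    refine ⟨?_, hnotboth v⟩
    by_cases hv : v ∈ W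
    · exact Or.inl (hregI v hv)
    · exact Or.inr (hregII v hv)
  · exact fun v hv => (hσ v (Set.mem_univ v) hv).1
  · intro v hreg p hp0 hplay hcons
    have hvW : v ∈ W := by
      by_contra h
      exact hnotboth v ⟨hreg, hregII v h⟩
    exact hwin p (by rw [hp0]; exact hvW) hplay (fun n => Set.mem_univ _) hcons
  · exact fun v hv => (hτ v (Set.mem_univ v) hv).1
  · intro v hreg p hp0 hplay hcons
    have hvW : v ∉ W := by
      intro h
      exact hnotboth v ⟨hregI v h, hreg⟩
    exact hlose p (Set.mem_univ _) (by rw [hp0]; exact hvW) hplay (fun n => Set.mem_univ _) hcons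
end

section
/- Let V be a type, f : V → V a function, x₀ : V, and c : V → Fin k a coloring. Consider the orbit x_n = f^n(x₀). Let Reach(y) denote the forward orbit {f^n(y) : n ∈ ℕ} of y. Then for any i < k, the following are equivalent: (a) i is the least color such that c(x_n) = i for infinitely many n; (b) for every j < i there exists y in the orbit of x₀ such that no element of Reach(y) has color j, and for every y in the orbit of x₀ some element of Reach(y) has color i. -/
/-- Along the orbit `x_n = f^[n] x₀` with colors `c` bounded by `k`, for `i < k` the
following are equivalent: (a) `i` is the least color occurring infinitely often;
(b) for every `j < i` some point `y` of the orbit has no point of color `j` in its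
forward orbit, and from every point of the orbit some point of color `i` is reachable. -/
theorem least_recurring_color_iff_reachability {V : Type*} (k : ℕ) (f : V → V) (x₀ : V)
    (c : V → ℕ) (hc : ∀ v, c v < k) (i : ℕ) (hi : i < k) :
    ({n | c (f^[n] x₀) = i}.Infinite ∧ ∀ j < i, {n | c (f^[n] x₀) = j}.Finite) ↔
      ((∀ j < i, ∃ m : ℕ, ∀ n : ℕ, c (f^[n] (f^[m] x₀)) ≠ j) ∧
        ∀ m : ℕ, ∃ n : ℕ, c (f^[n] (f^[m] x₀)) = i) := by
  have key : ∀ n m : ℕ, f^[n] (f^[m] x₀) = f^[n + m] x₀ := by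
    intro n m; rw [← Function.iterate_add_apply]
  constructor
  · rintro ⟨hinf, hfin⟩
    constructor
    · intro j hj
      obtain ⟨m, hm⟩ := ((hfin j hj).bddAbove)
      refine ⟨m + 1, fun n hn => ?_⟩
      have := hm (show n + (m + 1) ∈ {n | c (f^[n] x₀) = j} by
        show c (f^[n + (m + 1)] x₀) = j
        rw [← key]; exact hn)
      omega
    · intro m
      obtain ⟨n, hn, hnm⟩ := hinf.exists_gt m
      exact ⟨n - m, by rw [key]; have : n - m + m = n := by omega
                       rw [this]; exact hn⟩
  · rintro ⟨h1, h2⟩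
    constructor
    · apply Set.infinite_of_not_bddAbove
      rintro ⟨m, hm⟩
      obtain ⟨n, hn⟩ := h2 (m + 1)
      rw [key] at hn
      have := hm (show n + (m + 1) ∈ {n | c (f^[n] x₀) = i} from hn)
      omega
    · intro j hj
      obtain ⟨m, hm⟩ := h1 j hj
      apply Set.Finite.subset (Set.finite_Iio m)
      intro n hn
      by_contra hc'
      simp [Set.mem_Iio, not_lt] at hc'
      have := hm (n - m)
      rw [key] at this
      have hnm : n - m + m = n := by omega
      rw [hnm] at this
      exact this hn
end

section
/- Let 𝒢 be an edge labelled parity game over alphabets Σin, Σout with node sets V_in, V_out, initial node v₀ ∈ V_in, transition function δ : (V_in × Σin) ∪ (V_out × Σout) → V, and parity colors on nodes; let R_𝒢 ⊆ Σin^ω × Σout^ω be the set of pairs (x, y) whose induced play is winning for player output. Then there exists a causal operator f : Σin^ω → Σout^ω implementing R_𝒢 (i.e., (x, f(x)) ∈ R_𝒢 for all x) if and only if player output has a winning strategy from v₀ in the underlying (non edge labelled) parity game obtained by forgetting edge labels. -/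
section GCP

variable {Vin Vout A B : Type*}

/-- The input-nodes of the play induced by the pair of words `(x, y)`:
`v 0 = v₀`, `w n = δi (v n) (x n)`, `v (n+1) = δo (w n) (y n)`. -/
def pairPlay (δi : Vin → A → Vout) (δo : Vout → B → Vin) (v₀ : Vin)
    (x : ℕ → A) (y : ℕ → B) : ℕ → Vin
  | 0 => v₀
  | n + 1 => δo (δi (pairPlay δi δo v₀ x y n) (x n)) (y n)

/-- The interleaved color sequence of the play induced by `(x, y)`. -/
def pairColors (δi : Vin → A → Vout) (δo : Vout → B → Vin)
    (ci : Vin → ℕ) (co : Vout → ℕ) (v₀ : Vin) (x : ℕ → A) (y : ℕ → B) (n : ℕ) : ℕ :=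
  if n % 2 = 0 then ci (pairPlay δi δo v₀ x y (n / 2))
  else co (δi (pairPlay δi δo v₀ x y (n / 2)) (x (n / 2)))

/-- A color sequence is winning for player output iff the least color occurring
infinitely often is even. -/
def OutWinsSeq (q : ℕ → ℕ) : Prop :=
  ∃ i, Even i ∧ {n | q n = i}.Infinite ∧ ∀ j < i, {n | q n = j}.Finite

/-- `(x, y) ∈ R_𝒢`: the induced play is winning for player output. -/
def PairWinning (δi : Vin → A → Vout) (δo : Vout → B → Vin)
    (ci : Vin → ℕ) (co : Vout → ℕ) (v₀ : Vin) (x : ℕ → A) (y : ℕ → B) : Prop :=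
  OutWinsSeq (pairColors δi δo ci co v₀ x y)

/-- An operator is causal if its `n`-th output letter depends only on the first `n+1`
input letters. -/
def Causal (f : (ℕ → A) → ℕ → B) : Prop :=
  ∀ x x' n, (∀ k ≤ n, x k = x' k) → f x n = f x' n

/-- The edge relation of the underlying (non edge labelled) parity game. -/
def UEdge (δi : Vin → A → Vout) (δo : Vout → B → Vin) :
    (Vin ⊕ Vout) → (Vin ⊕ Vout) → Prop
  | Sum.inl v, Sum.inr w => ∃ σ : A, δi v σ = w
  | Sum.inr w, Sum.inl v => ∃ τ : B, δo w τ = v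
  | _, _ => False

def hist (p : ℕ → Vin ⊕ Vout) (n : ℕ) : List (Vin ⊕ Vout) :=
  List.ofFn fun i : Fin (n + 1) => p i

/-- A (general) strategy for player output produces legal moves at output nodes. -/
def LegalOut (δi : Vin → A → Vout) (δo : Vout → B → Vin)
    (s : List (Vin ⊕ Vout) → Vin ⊕ Vout) : Prop :=
  ∀ h p, h.getLast? = some p → p.isRight = true → UEdge δi δo p (s h)

/-- A play from `v` of the underlying game consistent with output's strategy `s`. -/
def ConsOut (δi : Vin → A → Vout) (δo : Vout → B → Vin)
    (s : List (Vin ⊕ Vout) → Vin ⊕ Vout) (v : Vin ⊕ Vout) (p : ℕ → Vin ⊕ Vout) : Prop :=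
  p 0 = v ∧ (∀ n, UEdge δi δo (p n) (p (n + 1))) ∧
    ∀ n, (p n).isRight = true → p (n + 1) = s (hist p n)

/-- Player output has a winning strategy from `v₀` in the underlying parity game. -/
def OutWinsUnderlying (δi : Vin → A → Vout) (δo : Vout → B → Vin)
    (ci : Vin → ℕ) (co : Vout → ℕ) (v₀ : Vin) : Prop :=
  ∃ s, LegalOut δi δo s ∧ ∀ p, ConsOut δi δo s (Sum.inl v₀) p →
    OutWinsSeq (fun n => Sum.elim ci co (p n))



theorem hist_length (p : ℕ → Vin ⊕ Vout) (n : ℕ) : (hist p n).length = n + 1 := by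
  simp [hist]

theorem hist_succ (p : ℕ → Vin ⊕ Vout) (n : ℕ) :
    hist p (n + 1) = hist p n ++ [p (n + 1)] := by
  unfold hist
  rw [List.ofFn_succ']
  simp

theorem hist_getLast? (p : ℕ → Vin ⊕ Vout) (n : ℕ) :
    (hist p n).getLast? = some (p n) := by
  cases n with
  | zero => simp [hist]
  | succ m => rw [hist_succ]; simp

theorem hist_getD (p : ℕ → Vin ⊕ Vout) (n i : ℕ) (hi : i ≤ n) (d : Vin ⊕ Vout) :
    (hist p n).getD i d = p i := by
  unfold hist
  have h1 : i < (List.ofFn fun i : Fin (n+1) => p i).length := by simp; omega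
  rw [List.getD_eq_getElem _ _ h1, List.getElem_ofFn]

def toVin (v₀ : Vin) : Vin ⊕ Vout → Vin
  | Sum.inl v => v
  | Sum.inr _ => v₀

@[simp] theorem toVin_inl (v₀ v : Vin) : toVin (Vout := Vout) v₀ (Sum.inl v) = v := rfl

open Classical in
noncomputable def decodeAux [Nonempty A] (δi : Vin → A → Vout) :
    (Vin ⊕ Vout) → (Vin ⊕ Vout) → A
  | Sum.inl v, Sum.inr w =>
      if hk : ∃ σ : A, δi v σ = w then hk.choose else Classical.arbitrary A
  | _, _ => Classical.arbitrary A

open Classical in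
theorem decodeAux_lr [Nonempty A] (δi : Vin → A → Vout) (v : Vin) (w : Vout) :
    decodeAux (Vout := Vout) δi (Sum.inl v) (Sum.inr w) =
      if hk : ∃ σ : A, δi v σ = w then hk.choose else Classical.arbitrary A := rfl

noncomputable def decode [Nonempty A] (δi : Vin → A → Vout) (v₀ : Vin)
    (h : List (Vin ⊕ Vout)) (k : ℕ) : A :=
  decodeAux δi (h.getD (2 * k) (Sum.inl v₀)) (h.getD (2 * k + 1) (Sum.inl v₀))

noncomputable def stratOf [Nonempty A] (δi : Vin → A → Vout) (δo : Vout → B → Vin)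
    (v₀ : Vin) (f : (ℕ → A) → ℕ → B) (h : List (Vin ⊕ Vout)) : Vin ⊕ Vout :=
  h.getLast?.elim (Sum.inl v₀)
    (Sum.elim (fun _ => Sum.inl v₀)
      (fun w => Sum.inl (δo w (f (decode δi v₀ h) (h.length / 2 - 1)))))

/- the simulation used in the converse direction -/

noncomputable def simAux (δi : Vin → A → Vout) (v₀ : Vin)
    (s : List (Vin ⊕ Vout) → Vin ⊕ Vout) (x : ℕ → A) : ℕ → Vin × List (Vin ⊕ Vout)
  | 0 => (v₀, [Sum.inl v₀, Sum.inr (δi v₀ (x 0))])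
  | k + 1 =>
      let q := simAux δi v₀ s x k
      let v' := toVin v₀ (s q.2)
      (v', q.2 ++ [Sum.inl v', Sum.inr (δi v' (x (k + 1)))])


noncomputable def simV (δi : Vin → A → Vout) (v₀ : Vin)
    (s : List (Vin ⊕ Vout) → Vin ⊕ Vout) (x : ℕ → A) (k : ℕ) : Vin :=
  (simAux δi v₀ s x k).1

noncomputable def simP (δi : Vin → A → Vout) (v₀ : Vin)
    (s : List (Vin ⊕ Vout) → Vin ⊕ Vout) (x : ℕ → A) (n : ℕ) : Vin ⊕ Vout :=
  if n % 2 = 0 then Sum.inl (simV δi v₀ s x (n / 2))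
  else Sum.inr (δi (simV δi v₀ s x (n / 2)) (x (n / 2)))

theorem simV_zero (δi : Vin → A → Vout) (v₀ : Vin) (s : List (Vin ⊕ Vout) → Vin ⊕ Vout)
    (x : ℕ → A) : simV δi v₀ s x 0 = v₀ := rfl

theorem simV_succ (δi : Vin → A → Vout) (v₀ : Vin) (s : List (Vin ⊕ Vout) → Vin ⊕ Vout)
    (x : ℕ → A) (k : ℕ) :
    simV δi v₀ s x (k + 1) = toVin v₀ (s (simAux δi v₀ s x k).2) := rfl

theorem simL_succ (δi : Vin → A → Vout) (v₀ : Vin) (s : List (Vin ⊕ Vout) → Vin ⊕ Vout)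
    (x : ℕ → A) (k : ℕ) :
    (simAux δi v₀ s x (k + 1)).2 = (simAux δi v₀ s x k).2 ++
      [Sum.inl (simV δi v₀ s x (k + 1)), Sum.inr (δi (simV δi v₀ s x (k + 1)) (x (k + 1)))] := rfl

theorem simP_even (δi : Vin → A → Vout) (v₀ : Vin) (s : List (Vin ⊕ Vout) → Vin ⊕ Vout)
    (x : ℕ → A) (k : ℕ) :
    simP δi v₀ s x (2 * k) = Sum.inl (simV δi v₀ s x k) := by
  simp [simP, show 2 * k % 2 = 0 from by omega, show 2 * k / 2 = k from by omega]

theorem simP_odd (δi : Vin → A → Vout) (v₀ : Vin) (s : List (Vin ⊕ Vout) → Vin ⊕ Vout)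
    (x : ℕ → A) (k : ℕ) :
    simP δi v₀ s x (2 * k + 1) = Sum.inr (δi (simV δi v₀ s x k) (x k)) := by
  simp [simP, show (2 * k + 1) % 2 = 1 from by omega, show (2 * k + 1) / 2 = k from by omega]

theorem simL_eq (δi : Vin → A → Vout) (v₀ : Vin) (s : List (Vin ⊕ Vout) → Vin ⊕ Vout)
    (x : ℕ → A) (k : ℕ) :
    (simAux δi v₀ s x k).2 = hist (simP δi v₀ s x) (2 * k + 1) := by
  induction k with
  | zero =>
    have h0 : simP δi v₀ s x 0 = Sum.inl v₀ := by
      simpa [simV_zero] using simP_even δi v₀ s x 0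
    have h1 : simP δi v₀ s x 1 = Sum.inr (δi v₀ (x 0)) := by
      simpa [simV_zero] using simP_odd δi v₀ s x 0
    show [Sum.inl v₀, Sum.inr (δi v₀ (x 0))] = _
    rw [show 2 * 0 + 1 = 0 + 1 from rfl, hist_succ, h1]
    simp [hist, h0]
  | succ k ih =>
    rw [simL_succ, ih]
    conv_rhs => rw [show 2 * (k + 1) + 1 = (2 * k + 1) + 1 + 1 from by ring,
      hist_succ _ ((2 * k + 1) + 1), hist_succ _ (2 * k + 1)]
    rw [show (2 * k + 1) + 1 = 2 * (k + 1) from by ring, simP_even,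
      show 2 * (k + 1) + 1 = 2 * (k + 1) + 1 from rfl, simP_odd]
    simp

theorem simAux_congr (δi : Vin → A → Vout) (v₀ : Vin) (s : List (Vin ⊕ Vout) → Vin ⊕ Vout)
    (x x' : ℕ → A) (k : ℕ) (hxx : ∀ j ≤ k, x j = x' j) :
    simAux δi v₀ s x k = simAux δi v₀ s x' k := by
  induction k with
  | zero => simp [simAux, hxx 0 le_rfl]
  | succ k ih =>
    have h1 := ih (fun j hj => hxx j (hj.trans (Nat.le_succ k)))
    simp [simAux, h1, hxx (k + 1) le_rfl]

open Classical in
noncomputable def simF [Nonempty B] (δi : Vin → A → Vout) (δo : Vout → B → Vin) (v₀ : Vin)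
    (s : List (Vin ⊕ Vout) → Vin ⊕ Vout) (x : ℕ → A) (k : ℕ) : B :=
  if h : ∃ τ : B, δo (δi (simV δi v₀ s x k) (x k)) τ = simV δi v₀ s x (k + 1)
  then h.choose else Classical.arbitrary B

open Classical in
theorem simF_def [Nonempty B] (δi : Vin → A → Vout) (δo : Vout → B → Vin) (v₀ : Vin)
    (s : List (Vin ⊕ Vout) → Vin ⊕ Vout) (x : ℕ → A) (k : ℕ) :
    simF δi δo v₀ s x k =
      if h : ∃ τ : B, δo (δi (simV δi v₀ s x k) (x k)) τ = simV δi v₀ s x (k + 1)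
      then h.choose else Classical.arbitrary B := rfl

/-- There is a causal operator implementing `R_𝒢` iff player output has a winning
strategy from `v₀` in the underlying parity game obtained by forgetting edge labels. -/
theorem causal_operator_iff_output_wins
    [Nonempty A] [Nonempty B]
    (δi : Vin → A → Vout) (δo : Vout → B → Vin)
    (ci : Vin → ℕ) (co : Vout → ℕ) (v₀ : Vin)
    (d : ℕ) (hci : ∀ v, ci v < d) (hco : ∀ w, co w < d) :
    (∃ f : (ℕ → A) → ℕ → B, Causal f ∧
        ∀ x, PairWinning δi δo ci co v₀ x (f x)) ↔
      OutWinsUnderlying δi δo ci co v₀ := by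
  constructor
  · rintro ⟨f, hcaus, hwin⟩
    refine ⟨stratOf δi δo v₀ f, ?_, ?_⟩
    · rintro h (u | w) hlast hright
      · simp at hright
      · unfold stratOf
        rw [hlast]
        simp only [Option.elim_some, Sum.elim_inr]
        exact ⟨_, rfl⟩
    · rintro p ⟨h0, hedge, hcons⟩
      -- alternation: even positions are input nodes, odd ones output nodes
      have shapeL : ∀ k, ∃ u, p (2 * k) = Sum.inl u ∧ ∃ z, p (2 * k + 1) = Sum.inr z := by
        intro k
        induction k with
        | zero =>
          refine ⟨v₀, by simpa using h0, ?_⟩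
          have h1 := hedge 0
          rw [show (0 : ℕ) + 1 = 2 * 0 + 1 by ring] at h1
          rw [show (2 : ℕ) * 0 = 0 by ring, h0] at h1
          cases hq : p (2 * 0 + 1) with
          | inl u' => rw [hq] at h1; simp [UEdge] at h1
          | inr z => exact ⟨z, rfl⟩
        | succ k ih =>
          obtain ⟨u, hu, z, hz⟩ := ih
          have h2 := hedge (2 * k + 1)
          rw [hz] at h2
          have e1 : 2 * k + 1 + 1 = 2 * (k + 1) := by ring
          rw [e1] at h2
          cases hq : p (2 * (k + 1)) with
          | inr z' => rw [hq] at h2; simp [UEdge] at h2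
          | inl u' =>
            refine ⟨u', rfl, ?_⟩
            have h3 := hedge (2 * (k + 1))
            rw [hq] at h3
            cases hq2 : p (2 * (k + 1) + 1) with
            | inl u'' => rw [hq2] at h3; simp [UEdge] at h3
            | inr z'' => exact ⟨z'', rfl⟩
      choose v hv w hw using shapeL
      have hE : ∀ k, ∃ σ : A, δi (v k) σ = w k := by
        intro k
        have h1 := hedge (2 * k)
        rw [hv k, hw k] at h1
        exact h1
      -- the decoded input word
      set x : ℕ → A := fun j => decode δi v₀ (hist p (2 * j + 1)) j with hxdef
      have hdec : ∀ k j, j ≤ k → decode δi v₀ (hist p (2 * k + 1)) j = x j := by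
        intro k j hj
        rw [hxdef]
        simp only [decode]
        rw [hist_getD p (2 * k + 1) (2 * j) (by omega),
          hist_getD p (2 * k + 1) (2 * j + 1) (by omega),
          hist_getD p (2 * j + 1) (2 * j) (by omega),
          hist_getD p (2 * j + 1) (2 * j + 1) (by omega)]
      have hxs : ∀ j, δi (v j) (x j) = w j := by
        intro j
        rw [hxdef]
        simp only [decode]
        rw [hist_getD p (2 * j + 1) (2 * j) (by omega), hist_getD p (2 * j + 1) (2 * j + 1) (by omega), hv j, hw j,
          decodeAux_lr, dif_pos (hE j)]
        exact (hE j).choose_spec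
      set y : ℕ → B := f x with hy
      have hv0 : v 0 = v₀ := by
        have := hv 0
        rw [show (2 : ℕ) * 0 = 0 by ring, h0] at this
        exact (Sum.inl.injEq _ _).mp this.symm
      have hpw2 : ∀ k, p (2 * k + 2) = Sum.inl (δo (w k) (y k)) := by
        intro k
        have hc := hcons (2 * k + 1) (by rw [hw k]; rfl)
        rw [hc]
        unfold stratOf
        rw [hist_getLast?, hw k]
        simp only [Option.elim_some, Sum.elim_inr, hist_length]
        have e2 : (2 * k + 1 + 1) / 2 - 1 = k := by omega
        rw [e2]
        congr 2
        apply hcaus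
        intro j hj
        exact hdec k j hj
      have hpp : ∀ k, pairPlay δi δo v₀ x y k = v k := by
        intro k
        induction k with
        | zero => simpa [pairPlay] using hv0.symm
        | succ k ih =>
          have h5 := hv (k + 1)
          rw [show 2 * (k + 1) = 2 * k + 2 by ring, hpw2 k] at h5
          have hvk : δo (w k) (y k) = v (k + 1) := Sum.inl_injective h5
          simp only [pairPlay, ih, hxs k, hvk]
      have hcolors : (fun n => Sum.elim ci co (p n)) = pairColors δi δo ci co v₀ x y := by
        funext n
        rcases Nat.even_or_odd n with ⟨m, hm⟩ | ⟨m, hm⟩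
        · have hn : n = 2 * m := by omega
          subst hn
          rw [hv m]
          simp [pairColors, show 2 * m % 2 = 0 from by omega,
            show 2 * m / 2 = m from by omega, hpp m]
        · have hn : n = 2 * m + 1 := by omega
          subst hn
          rw [hw m]
          simp [pairColors, show (2 * m + 1) % 2 = 1 from by omega,
            show (2 * m + 1) / 2 = m from by omega, hpp m, hxs m]
      rw [hcolors]
      exact hwin x
  · rintro ⟨s, hleg, hwins⟩
    -- last element of the simulated history
    have hlast : ∀ (x : ℕ → A) (k : ℕ), (simAux δi v₀ s x k).2.getLast? =
        some (Sum.inr (δi (simV δi v₀ s x k) (x k))) := by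
      intro x k
      rw [simL_eq, hist_getLast?, simP_odd]
    -- the key step property from legality of s
    have hstep : ∀ (x : ℕ → A) (k : ℕ), s (simAux δi v₀ s x k).2 = Sum.inl (simV δi v₀ s x (k + 1)) ∧
        ∃ τ : B, δo (δi (simV δi v₀ s x k) (x k)) τ = simV δi v₀ s x (k + 1) := by
      intro x k
      have hu := hleg (simAux δi v₀ s x k).2 (Sum.inr (δi (simV δi v₀ s x k) (x k)))
        (hlast x k) rfl
      cases hs : s (simAux δi v₀ s x k).2 with
      | inr w' => rw [hs] at hu; simp [UEdge] at hu
      | inl v' =>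
        have hV : simV δi v₀ s x (k + 1) = v' := by rw [simV_succ, hs]; rfl
        rw [hs] at hu
        exact ⟨by rw [hV], by rw [hV]; exact hu⟩
    refine ⟨simF δi δo v₀ s, ?_, ?_⟩
    · -- causality
      intro x x' n hxx
      have e0 : simAux δi v₀ s x n = simAux δi v₀ s x' n := simAux_congr _ _ _ _ _ _ hxx
      have e1 : simV δi v₀ s x n = simV δi v₀ s x' n := by rw [simV, e0, simV]
      have e2 : simV δi v₀ s x (n + 1) = simV δi v₀ s x' (n + 1) := by
        rw [simV_succ, e0, simV_succ]
      rw [simF_def, simF_def, e1, e2, hxx n le_rfl]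
    · intro x
      -- the induced pair play follows the simulation
      have hpp : ∀ k, pairPlay δi δo v₀ x (simF δi δo v₀ s x) k = simV δi v₀ s x k := by
        intro k
        induction k with
        | zero => rfl
        | succ k ih =>
          show δo (δi (pairPlay δi δo v₀ x (simF δi δo v₀ s x) k) (x k))
              (simF δi δo v₀ s x k) = _
          rw [ih, simF_def, dif_pos (hstep x k).2]
          exact (hstep x k).2.choose_spec
      -- the simulated play is consistent with s
      have hcons : ConsOut δi δo s (Sum.inl v₀) (simP δi v₀ s x) := by
        refine ⟨by simpa [simV_zero] using simP_even δi v₀ s x 0, ?_, ?_⟩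
        · intro n
          rcases Nat.even_or_odd n with ⟨m, hm⟩ | ⟨m, hm⟩
          · have hn : n = 2 * m := by omega
            subst hn
            rw [simP_even, show 2 * m + 1 = 2 * m + 1 from rfl, simP_odd]
            exact ⟨x m, rfl⟩
          · have hn : n = 2 * m + 1 := by omega
            subst hn
            rw [simP_odd, show 2 * m + 1 + 1 = 2 * (m + 1) from by ring, simP_even]
            exact (hstep x m).2
        · intro n hright
          rcases Nat.even_or_odd n with ⟨m, hm⟩ | ⟨m, hm⟩
          · have hn : n = 2 * m := by omega
            subst hn
            rw [simP_even] at hright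
            simp at hright
          · have hn : n = 2 * m + 1 := by omega
            subst hn
            rw [show 2 * m + 1 + 1 = 2 * (m + 1) from by ring, simP_even, ← simL_eq]
            exact ((hstep x m).1).symm
      have hW := hwins _ hcons
      -- translate the winning condition
      have hcolors : (fun n => Sum.elim ci co (simP δi v₀ s x n)) =
          pairColors δi δo ci co v₀ x (simF δi δo v₀ s x) := by
        funext n
        rcases Nat.even_or_odd n with ⟨m, hm⟩ | ⟨m, hm⟩
        · have hn : n = 2 * m := by omega
          subst hn
          rw [simP_even]
          simp [pairColors, show 2 * m % 2 = 0 from by omega,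
            show 2 * m / 2 = m from by omega, hpp m]
        · have hn : n = 2 * m + 1 := by omega
          subst hn
          rw [simP_odd]
          simp [pairColors, show (2 * m + 1) % 2 = 1 from by omega,
            show (2 * m + 1) / 2 = m from by omega, hpp m]
      unfold PairWinning
      rw [← hcolors]
      exact hW


end GCP
end

section
/- Let 𝒢 be an edge labelled parity game over Σin, Σout with transition function δ, and suppose φ : V_out → V_in is a uniform memoryless winning strategy for player output in the underlying parity game, whose winning region contains the initial node v₀, and suppose λ : V_out → Σout is a function with δ(w, λ(w)) = φ(w) for all w in the winning region. Define the transducer T with node set V_in, initial node v₀, and δ_T(v, σ) = (φ(δ(v, σ)), λ(δ(v, σ))). Then the causal operator f_T induced by T implements R_𝒢: for every x ∈ Σin^ω, the pair (x, f_T(x)) is winning for player output. -/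
section GCP

variable {Vin Vout A B : Type*}

/-- The input-nodes of the play from `v` against input word `x` when player output
follows the memoryless strategy `φ`. -/
def phiPlay (δi : Vin → A → Vout) (φ : Vout → Vin) (v : Vin) (x : ℕ → A) : ℕ → Vin
  | 0 => v
  | n + 1 => φ (δi (phiPlay δi φ v x n) (x n))

/-- The interleaved color sequence of the `φ`-play from `v` on input `x`. -/
def phiColors (δi : Vin → A → Vout) (φ : Vout → Vin)
    (ci : Vin → ℕ) (co : Vout → ℕ) (v : Vin) (x : ℕ → A) (n : ℕ) : ℕ :=
  if n % 2 = 0 then ci (phiPlay δi φ v x (n / 2))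
  else co (δi (phiPlay δi φ v x (n / 2)) (x (n / 2)))

/-- `v` is in the winning region of the memoryless output strategy `φ`:
every `φ`-play from `v` is winning for player output. -/
def WinFrom (δi : Vin → A → Vout) (φ : Vout → Vin)
    (ci : Vin → ℕ) (co : Vout → ℕ) (v : Vin) : Prop :=
  ∀ x : ℕ → A, OutWinsSeq (phiColors δi φ ci co v x)

lemma outWinsSeq_shift {q : ℕ → ℕ} (k : ℕ) (h : OutWinsSeq q) :
    OutWinsSeq (fun n => q (n + k)) := by
  obtain ⟨i, hie, hinf, hfin⟩ := h
  refine ⟨i, hie, ?_, ?_⟩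
  · intro hf
    apply hinf
    have hsub : {n | q n = i} ⊆ ((fun n => n + k) '' {n | q (n + k) = i}) ∪ {n | n < k} := by
      intro n hn
      rcases lt_or_ge n k with h' | h'
      · exact Or.inr h'
      · exact Or.inl ⟨n - k, by simpa [Nat.sub_add_cancel h'] using hn, Nat.sub_add_cancel h'⟩
    exact Set.Finite.subset ((hf.image _).union (Set.finite_lt_nat k)) hsub
  · intro j hj
    have : {n | q (n + k) = j} = (fun n => n + k) ⁻¹' {n | q n = j} := rfl
    rw [this]
    exact (hfin j hj).preimage (add_left_injective k).injOn

lemma phiPlay_shift (δi : Vin → A → Vout) (φ : Vout → Vin) (v : Vin) (x : ℕ → A) :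
    ∀ n, phiPlay δi φ (φ (δi v (x 0))) (fun n => x (n + 1)) n = phiPlay δi φ v x (n + 1)
  | 0 => rfl
  | n + 1 => by
    simp only [phiPlay, phiPlay_shift δi φ v x n]

lemma winFrom_step (δi : Vin → A → Vout) (φ : Vout → Vin)
    (ci : Vin → ℕ) (co : Vout → ℕ) (v : Vin) (a : A)
    (h : WinFrom δi φ ci co v) : WinFrom δi φ ci co (φ (δi v a)) := by
  intro x'
  set x : ℕ → A := fun n => match n with | 0 => a | n + 1 => x' n with hx
  have h1 := outWinsSeq_shift 2 (h x)
  have heq : (fun n => phiColors δi φ ci co v x (n + 2)) = phiColors δi φ ci co (φ (δi v a)) x' := by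
    funext n
    have hx0 : x 0 = a := rfl
    have hdiv : (n + 2) / 2 = n / 2 + 1 := by omega
    have hmod : (n + 2) % 2 = n % 2 := by omega
    have hp : ∀ m, phiPlay δi φ (φ (δi v a)) x' m = phiPlay δi φ v x (m + 1) := by
      intro m
      have := phiPlay_shift δi φ v x m
      simpa [hx0] using this
    simp only [phiColors, hdiv, hmod, hp]
    rfl
  rwa [heq] at h1

lemma winFrom_play (δi : Vin → A → Vout) (φ : Vout → Vin)
    (ci : Vin → ℕ) (co : Vout → ℕ) (v : Vin) (x : ℕ → A)
    (h : WinFrom δi φ ci co v) :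
    ∀ n, WinFrom δi φ ci co (phiPlay δi φ v x n)
  | 0 => h
  | n + 1 => winFrom_step δi φ ci co _ _ (winFrom_play δi φ ci co v x h n)

/-- If `φ` is a memoryless winning strategy for player output whose winning region
contains `v₀`, and `lam` picks for each output node in the winning region a letter
realizing the strategy edge (`δo w (lam w) = φ w`), then the causal operator induced
by the transducer `δ_T(v, σ) = (φ (δi v σ), lam (δi v σ))` implements `R_𝒢`:
for every input `x`, the pair `(x, f_T x)` is winning for player output. -/
theorem transducer_from_strategy_implements
    (δi : Vin → A → Vout) (δo : Vout → B → Vin)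
    (ci : Vin → ℕ) (co : Vout → ℕ) (v₀ : Vin)
    (φ : Vout → Vin) (lam : Vout → B)
    (hv₀ : WinFrom δi φ ci co v₀)
    (hlam : ∀ w : Vout, WinFrom δi φ ci co (φ w) → δo w (lam w) = φ w) :
    ∀ x : ℕ → A,
      OutWinsSeq (pairColors δi δo ci co v₀ x
        (fun n => lam (δi (phiPlay δi φ v₀ x n) (x n)))) := by
  intro x
  set y : ℕ → B := fun n => lam (δi (phiPlay δi φ v₀ x n) (x n)) with hy
  have hpp : ∀ n, pairPlay δi δo v₀ x y n = phiPlay δi φ v₀ x n := by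
    intro n
    induction n with
    | zero => rfl
    | succ n ih =>
      have hw : WinFrom δi φ ci co (φ (δi (phiPlay δi φ v₀ x n) (x n))) :=
        winFrom_play δi φ ci co v₀ x hv₀ (n + 1)
      simp only [pairPlay, phiPlay, ih]
      exact hlam _ hw
  have hc : pairColors δi δo ci co v₀ x y = phiColors δi φ ci co v₀ x := by
    funext n
    simp only [pairColors, phiColors, hpp]
  rw [hc]
  exact hv₀ x

end GCP
end
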